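/- Let k be a field of characteristic 3 properly containing F_3, and let ϑ ∈ k \ F_3. In R = k[s,t,u,v]/(s², sv, t², tv, u², uv, v² − st − su), the element (1 − ϑ)s + ϑt + u + v is an exact zero divisor. -/

import Mathlib

universe u

@[ext] structure A8 (k : Type u) where
  c1 : k
  cs : k
  ct : k
  cu : k
  cv : k
  cst : k
  csu : k
  ctu : k

namespace A8
variable {k : Type u} [CommRing k]

instance : Zero (A8 k) := ⟨⟨0,0,0,0,0,0,0,0⟩⟩
instance : One (A8 k) := ⟨⟨1,0,0,0,0,0,0,0⟩⟩
instance : Add (A8 k) := ⟨fun x y => ⟨x.c1+y.c1, x.cs+y.cs, x.ct+y.ct, x.cu+y.cu,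
  x.cv+y.cv, x.cst+y.cst, x.csu+y.csu, x.ctu+y.ctu⟩⟩
instance : Neg (A8 k) := ⟨fun x => ⟨-x.c1, -x.cs, -x.ct, -x.cu, -x.cv, -x.cst, -x.csu, -x.ctu⟩⟩
instance : SMul k (A8 k) := ⟨fun a x => ⟨a*x.c1, a*x.cs, a*x.ct, a*x.cu, a*x.cv, a*x.cst, a*x.csu, a*x.ctu⟩⟩
instance : Mul (A8 k) := ⟨fun x y =>
  ⟨x.c1*y.c1,
   x.c1*y.cs + x.cs*y.c1,
   x.c1*y.ct + x.ct*y.c1,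
   x.c1*y.cu + x.cu*y.c1,
   x.c1*y.cv + x.cv*y.c1,
   x.c1*y.cst + x.cst*y.c1 + x.cs*y.ct + x.ct*y.cs + x.cv*y.cv,
   x.c1*y.csu + x.csu*y.c1 + x.cs*y.cu + x.cu*y.cs + x.cv*y.cv,
   x.c1*y.ctu + x.ctu*y.c1 + x.ct*y.cu + x.cu*y.ct⟩⟩

@[simp] lemma zero_c1 : (0 : A8 k).c1 = 0 := rfl
@[simp] lemma zero_cs : (0 : A8 k).cs = 0 := rfl
@[simp] lemma zero_ct : (0 : A8 k).ct = 0 := rfl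
@[simp] lemma zero_cu : (0 : A8 k).cu = 0 := rfl
@[simp] lemma zero_cv : (0 : A8 k).cv = 0 := rfl
@[simp] lemma zero_cst : (0 : A8 k).cst = 0 := rfl
@[simp] lemma zero_csu : (0 : A8 k).csu = 0 := rfl
@[simp] lemma zero_ctu : (0 : A8 k).ctu = 0 := rfl
@[simp] lemma one_c1 : (1 : A8 k).c1 = 1 := rfl
@[simp] lemma one_cs : (1 : A8 k).cs = 0 := rfl
@[simp] lemma one_ct : (1 : A8 k).ct = 0 := rfl
@[simp] lemma one_cu : (1 : A8 k).cu = 0 := rfl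
@[simp] lemma one_cv : (1 : A8 k).cv = 0 := rfl
@[simp] lemma one_cst : (1 : A8 k).cst = 0 := rfl
@[simp] lemma one_csu : (1 : A8 k).csu = 0 := rfl
@[simp] lemma one_ctu : (1 : A8 k).ctu = 0 := rfl
@[simp] lemma add_c1 (x y : A8 k) : (x+y).c1 = x.c1 + y.c1 := rfl
@[simp] lemma add_cs (x y : A8 k) : (x+y).cs = x.cs + y.cs := rfl
@[simp] lemma add_ct (x y : A8 k) : (x+y).ct = x.ct + y.ct := rfl
@[simp] lemma add_cu (x y : A8 k) : (x+y).cu = x.cu + y.cu := rfl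
@[simp] lemma add_cv (x y : A8 k) : (x+y).cv = x.cv + y.cv := rfl
@[simp] lemma add_cst (x y : A8 k) : (x+y).cst = x.cst + y.cst := rfl
@[simp] lemma add_csu (x y : A8 k) : (x+y).csu = x.csu + y.csu := rfl
@[simp] lemma add_ctu (x y : A8 k) : (x+y).ctu = x.ctu + y.ctu := rfl
@[simp] lemma neg_c1 (x : A8 k) : (-x).c1 = -x.c1 := rfl
@[simp] lemma neg_cs (x : A8 k) : (-x).cs = -x.cs := rfl
@[simp] lemma neg_ct (x : A8 k) : (-x).ct = -x.ct := rfl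
@[simp] lemma neg_cu (x : A8 k) : (-x).cu = -x.cu := rfl
@[simp] lemma neg_cv (x : A8 k) : (-x).cv = -x.cv := rfl
@[simp] lemma neg_cst (x : A8 k) : (-x).cst = -x.cst := rfl
@[simp] lemma neg_csu (x : A8 k) : (-x).csu = -x.csu := rfl
@[simp] lemma neg_ctu (x : A8 k) : (-x).ctu = -x.ctu := rfl
@[simp] lemma smul_c1 (a : k) (x : A8 k) : (a • x).c1 = a * x.c1 := rfl
@[simp] lemma smul_cs (a : k) (x : A8 k) : (a • x).cs = a * x.cs := rfl
@[simp] lemma smul_ct (a : k) (x : A8 k) : (a • x).ct = a * x.ct := rfl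
@[simp] lemma smul_cu (a : k) (x : A8 k) : (a • x).cu = a * x.cu := rfl
@[simp] lemma smul_cv (a : k) (x : A8 k) : (a • x).cv = a * x.cv := rfl
@[simp] lemma smul_cst (a : k) (x : A8 k) : (a • x).cst = a * x.cst := rfl
@[simp] lemma smul_csu (a : k) (x : A8 k) : (a • x).csu = a * x.csu := rfl
@[simp] lemma smul_ctu (a : k) (x : A8 k) : (a • x).ctu = a * x.ctu := rfl
@[simp] lemma mul_c1 (x y : A8 k) : (x*y).c1 = x.c1*y.c1 := rfl
@[simp] lemma mul_cs (x y : A8 k) : (x*y).cs = x.c1*y.cs + x.cs*y.c1 := rfl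
@[simp] lemma mul_ct (x y : A8 k) : (x*y).ct = x.c1*y.ct + x.ct*y.c1 := rfl
@[simp] lemma mul_cu (x y : A8 k) : (x*y).cu = x.c1*y.cu + x.cu*y.c1 := rfl
@[simp] lemma mul_cv (x y : A8 k) : (x*y).cv = x.c1*y.cv + x.cv*y.c1 := rfl
@[simp] lemma mul_cst (x y : A8 k) : (x*y).cst = x.c1*y.cst + x.cst*y.c1 + x.cs*y.ct + x.ct*y.cs + x.cv*y.cv := rfl
@[simp] lemma mul_csu (x y : A8 k) : (x*y).csu = x.c1*y.csu + x.csu*y.c1 + x.cs*y.cu + x.cu*y.cs + x.cv*y.cv := rfl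
@[simp] lemma mul_ctu (x y : A8 k) : (x*y).ctu = x.c1*y.ctu + x.ctu*y.c1 + x.ct*y.cu + x.cu*y.ct := rfl

instance : CommRing (A8 k) where
  add_assoc x y z := by ext <;> simp <;> ring
  zero_add x := by ext <;> simp
  add_zero x := by ext <;> simp
  add_comm x y := by ext <;> simp <;> ring
  neg_add_cancel x := by ext <;> simp
  mul_assoc x y z := by ext <;> simp <;> ring
  one_mul x := by ext <;> simp
  mul_one x := by ext <;> simp
  left_distrib x y z := by ext <;> simp <;> ring
  right_distrib x y z := by ext <;> simp <;> ring
  mul_comm x y := by ext <;> simp <;> ring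
  zero_mul x := by ext <;> simp
  mul_zero x := by ext <;> simp
  nsmul n x := (n : k) • x
  nsmul_zero x := by show ((0:ℕ):k) • x = 0; ext <;> simp
  nsmul_succ n x := by show ((n+1:ℕ):k) • x = ((n:ℕ):k) • x + x; ext <;> simp <;> ring
  zsmul n x := (n : k) • x
  zsmul_zero' x := by show ((0:ℤ):k) • x = 0; ext <;> simp
  zsmul_succ' n x := by show ((Int.ofNat n.succ : ℤ):k) • x = ((Int.ofNat n : ℤ):k) • x + x; ext <;> simp <;> ring
  zsmul_neg' n x := by show ((Int.negSucc n : ℤ):k) • x = -(((Int.ofNat n.succ : ℤ):k) • x); ext <;> simp [Int.cast_negSucc] <;> ring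

def algMap : k →+* A8 k where
  toFun a := ⟨a,0,0,0,0,0,0,0⟩
  map_one' := rfl
  map_mul' a b := by ext <;> simp
  map_zero' := rfl
  map_add' a b := by ext <;> simp

instance : Algebra k (A8 k) where
  algebraMap := algMap
  commutes' a x := by ext <;> simp [algMap] <;> ring
  smul_def' a x := by ext <;> simp [algMap]

@[simp] lemma algebraMap_c1 (a : k) : (algebraMap k (A8 k) a).c1 = a := rfl
@[simp] lemma algebraMap_cs (a : k) : (algebraMap k (A8 k) a).cs = 0 := rfl
@[simp] lemma algebraMap_ct (a : k) : (algebraMap k (A8 k) a).ct = 0 := rfl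
@[simp] lemma algebraMap_cu (a : k) : (algebraMap k (A8 k) a).cu = 0 := rfl
@[simp] lemma algebraMap_cv (a : k) : (algebraMap k (A8 k) a).cv = 0 := rfl
@[simp] lemma algebraMap_cst (a : k) : (algebraMap k (A8 k) a).cst = 0 := rfl
@[simp] lemma algebraMap_csu (a : k) : (algebraMap k (A8 k) a).csu = 0 := rfl
@[simp] lemma algebraMap_ctu (a : k) : (algebraMap k (A8 k) a).ctu = 0 := rfl

end A8

open MvPolynomial

set_option synthInstance.maxHeartbeats 1000000
set_option maxHeartbeats 1000000

/-- The defining ideal of `R = k[s,t,u,v]/(s², sv, t², tv, u², uv, v² - st - su)`. -/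
noncomputable def I14 (k : Type u) [CommRing k] : Ideal (MvPolynomial (Fin 4) k) :=
  Ideal.span {X 0 ^ 2, X 0 * X 3, X 1 ^ 2, X 1 * X 3, X 2 ^ 2, X 2 * X 3,
    X 3 ^ 2 - X 0 * X 1 - X 0 * X 2}

/-- The ring `R = k[s,t,u,v]/(s², sv, t², tv, u², uv, v² - st - su)`. -/
abbrev R14 (k : Type u) [CommRing k] : Type u := MvPolynomial (Fin 4) k ⧸ I14 k

/-- The annihilator of an element of `R` as an ideal. -/
def annIdeal (R : Type u) [CommRing R] (a : R) : Ideal R :=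
  LinearMap.ker (LinearMap.mulLeft R a)

/-- `x` is an exact zero divisor. -/
def IsExactZeroDivisor (R : Type u) [CommRing R] (x : R) : Prop :=
  x ≠ 0 ∧ ¬ IsUnit x ∧
    ∃ w, annIdeal R x = Ideal.span {w} ∧ annIdeal R w = Ideal.span {x}

namespace A8
variable {k : Type u} [CommRing k]

def S : A8 k := ⟨0,1,0,0,0,0,0,0⟩
def T : A8 k := ⟨0,0,1,0,0,0,0,0⟩
def U : A8 k := ⟨0,0,0,1,0,0,0,0⟩
def V : A8 k := ⟨0,0,0,0,1,0,0,0⟩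

def φ : MvPolynomial (Fin 4) k →ₐ[k] A8 k := aeval ![S, T, U, V]

lemma φ_le_ker : I14 k ≤ RingHom.ker (φ (k := k)).toRingHom := by
  rw [I14, Ideal.span_le]
  intro p hp
  simp only [Set.mem_insert_iff, Set.mem_singleton_iff] at hp
  rcases hp with h|h|h|h|h|h|h <;> subst h <;>
    simp only [RingHom.mem_ker, AlgHom.toRingHom_eq_coe, RingHom.coe_coe, φ, map_mul, map_sub,
      map_pow, aeval_X] <;>
    · ext <;> simp [pow_two, sub_eq_add_neg, S, T, U, V] <;> ring

noncomputable def ψ : (MvPolynomial (Fin 4) k ⧸ I14 k) →ₐ[k] A8 k :=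
  Ideal.Quotient.liftₐ (I14 k) φ (fun a ha => φ_le_ker ha)

@[simp] lemma ψ_mk (p : MvPolynomial (Fin 4) k) :
    ψ (Ideal.Quotient.mk (I14 k) p) = φ p := rfl

end A8

namespace A8
variable {k : Type u} [CommRing k]

local notation "mkq" => Ideal.Quotient.mk (I14 k)

noncomputable def B : Fin 8 → (MvPolynomial (Fin 4) k ⧸ I14 k) :=
  ![mkq 1, mkq (X 0), mkq (X 1), mkq (X 2), mkq (X 3),
    mkq (X 0 * X 1), mkq (X 0 * X 2), mkq (X 1 * X 2)]

lemma mem_of_eq {p q : MvPolynomial (Fin 4) k} (h : q ∈ I14 k) (e : p = q) : p ∈ I14 k :=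
  e ▸ h

lemma m1 : (X 0 ^ 2 : MvPolynomial (Fin 4) k) ∈ I14 k := Ideal.subset_span (by simp)
lemma m2 : (X 0 * X 3 : MvPolynomial (Fin 4) k) ∈ I14 k := Ideal.subset_span (by simp)
lemma m3 : (X 1 ^ 2 : MvPolynomial (Fin 4) k) ∈ I14 k := Ideal.subset_span (by simp)
lemma m4 : (X 1 * X 3 : MvPolynomial (Fin 4) k) ∈ I14 k := Ideal.subset_span (by simp)
lemma m5 : (X 2 ^ 2 : MvPolynomial (Fin 4) k) ∈ I14 k := Ideal.subset_span (by simp)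
lemma m6 : (X 2 * X 3 : MvPolynomial (Fin 4) k) ∈ I14 k := Ideal.subset_span (by simp)
lemma m7 : (X 3 ^ 2 - X 0 * X 1 - X 0 * X 2 : MvPolynomial (Fin 4) k) ∈ I14 k :=
  Ideal.subset_span (by simp)

lemma mstu : (X 0 * X 1 * X 2 : MvPolynomial (Fin 4) k) ∈ I14 k := by
  have e : (X 0 * X 1 * X 2 : MvPolynomial (Fin 4) k)
      = X 3 * (X 2 * X 3) - X 0 * (X 2 ^ 2) - X 2 * (X 3 ^ 2 - X 0 * X 1 - X 0 * X 2) := by ring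
  rw [e]
  exact sub_mem (sub_mem (Ideal.mul_mem_left _ _ m6) (Ideal.mul_mem_left _ _ m5))
    (Ideal.mul_mem_left _ _ m7)

lemma hspan (j : Fin 8) : B (k := k) j ∈ Submodule.span k (Set.range (B (k := k))) :=
  Submodule.subset_span ⟨j, rfl⟩

lemma mul_X_mem (i : Fin 4) (y : MvPolynomial (Fin 4) k ⧸ I14 k)
    (hy : y ∈ Submodule.span k (Set.range (B (k := k)))) :
    y * mkq (X i) ∈ Submodule.span k (Set.range (B (k := k))) := by
  induction hy using Submodule.span_induction with
  | zero => rw [zero_mul]; exact zero_mem _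
  | add a b _ _ ha hb => rw [add_mul]; exact add_mem ha hb
  | smul a x _ hx => rw [smul_mul_assoc]; exact Submodule.smul_mem _ _ hx
  | mem x hx =>
    obtain ⟨j, rfl⟩ := hx
    have hz : ∀ p : MvPolynomial (Fin 4) k, p ∈ I14 k →
        (mkq p) ∈ Submodule.span k (Set.range (B (k := k))) := fun p hp => by
      rw [Ideal.Quotient.eq_zero_iff_mem.mpr hp]; exact zero_mem _
    fin_cases j <;> fin_cases i
    · show mkq (1) * mkq (X 0) ∈ _
      rw [← map_mul]
      rw [one_mul]; exact hspan 1
    · show mkq (1) * mkq (X 1) ∈ _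
      rw [← map_mul]
      rw [one_mul]; exact hspan 2
    · show mkq (1) * mkq (X 2) ∈ _
      rw [← map_mul]
      rw [one_mul]; exact hspan 3
    · show mkq (1) * mkq (X 3) ∈ _
      rw [← map_mul]
      rw [one_mul]; exact hspan 4
    · show mkq (X 0) * mkq (X 0) ∈ _
      rw [← map_mul]
      exact hz _ (mem_of_eq m1 (by ring))
    · show mkq (X 0) * mkq (X 1) ∈ _
      rw [← map_mul]
      exact hspan 5
    · show mkq (X 0) * mkq (X 2) ∈ _
      rw [← map_mul]
      exact hspan 6
    · show mkq (X 0) * mkq (X 3) ∈ _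
      rw [← map_mul]
      exact hz _ m2
    · show mkq (X 1) * mkq (X 0) ∈ _
      rw [← map_mul]
      rw [show (X 1 * X 0 : MvPolynomial (Fin 4) k) = X 0 * X 1 by ring]; exact hspan 5
    · show mkq (X 1) * mkq (X 1) ∈ _
      rw [← map_mul]
      exact hz _ (mem_of_eq m3 (by ring))
    · show mkq (X 1) * mkq (X 2) ∈ _
      rw [← map_mul]
      exact hspan 7
    · show mkq (X 1) * mkq (X 3) ∈ _
      rw [← map_mul]
      exact hz _ m4
    · show mkq (X 2) * mkq (X 0) ∈ _
      rw [← map_mul]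
      rw [show (X 2 * X 0 : MvPolynomial (Fin 4) k) = X 0 * X 2 by ring]; exact hspan 6
    · show mkq (X 2) * mkq (X 1) ∈ _
      rw [← map_mul]
      rw [show (X 2 * X 1 : MvPolynomial (Fin 4) k) = X 1 * X 2 by ring]; exact hspan 7
    · show mkq (X 2) * mkq (X 2) ∈ _
      rw [← map_mul]
      exact hz _ (mem_of_eq m5 (by ring))
    · show mkq (X 2) * mkq (X 3) ∈ _
      rw [← map_mul]
      exact hz _ m6
    · show mkq (X 3) * mkq (X 0) ∈ _
      rw [← map_mul]
      exact hz _ (mem_of_eq m2 (by ring))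
    · show mkq (X 3) * mkq (X 1) ∈ _
      rw [← map_mul]
      exact hz _ (mem_of_eq m4 (by ring))
    · show mkq (X 3) * mkq (X 2) ∈ _
      rw [← map_mul]
      exact hz _ (mem_of_eq m6 (by ring))
    · show mkq (X 3) * mkq (X 3) ∈ _
      rw [← map_mul]
      have e : mkq (X 3 * X 3) = mkq (X 0 * X 1) + mkq (X 0 * X 2) := by
        rw [← map_add]
        exact Ideal.Quotient.eq.mpr (mem_of_eq m7 (by ring))
      rw [e]; exact add_mem (hspan 5) (hspan 6)
    · show mkq (X 0 * X 1) * mkq (X 0) ∈ _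
      rw [← map_mul]
      exact hz _ (mem_of_eq (Ideal.mul_mem_left _ (X 1) m1) (by ring))
    · show mkq (X 0 * X 1) * mkq (X 1) ∈ _
      rw [← map_mul]
      exact hz _ (mem_of_eq (Ideal.mul_mem_left _ (X 0) m3) (by ring))
    · show mkq (X 0 * X 1) * mkq (X 2) ∈ _
      rw [← map_mul]
      exact hz _ mstu
    · show mkq (X 0 * X 1) * mkq (X 3) ∈ _
      rw [← map_mul]
      exact hz _ (mem_of_eq (Ideal.mul_mem_left _ (X 1) m2) (by ring))
    · show mkq (X 0 * X 2) * mkq (X 0) ∈ _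
      rw [← map_mul]
      exact hz _ (mem_of_eq (Ideal.mul_mem_left _ (X 2) m1) (by ring))
    · show mkq (X 0 * X 2) * mkq (X 1) ∈ _
      rw [← map_mul]
      exact hz _ (mem_of_eq mstu (by ring))
    · show mkq (X 0 * X 2) * mkq (X 2) ∈ _
      rw [← map_mul]
      exact hz _ (mem_of_eq (Ideal.mul_mem_left _ (X 0) m5) (by ring))
    · show mkq (X 0 * X 2) * mkq (X 3) ∈ _
      rw [← map_mul]
      exact hz _ (mem_of_eq (Ideal.mul_mem_left _ (X 2) m2) (by ring))
    · show mkq (X 1 * X 2) * mkq (X 0) ∈ _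
      rw [← map_mul]
      exact hz _ (mem_of_eq mstu (by ring))
    · show mkq (X 1 * X 2) * mkq (X 1) ∈ _
      rw [← map_mul]
      exact hz _ (mem_of_eq (Ideal.mul_mem_left _ (X 2) m3) (by ring))
    · show mkq (X 1 * X 2) * mkq (X 2) ∈ _
      rw [← map_mul]
      exact hz _ (mem_of_eq (Ideal.mul_mem_left _ (X 1) m5) (by ring))
    · show mkq (X 1 * X 2) * mkq (X 3) ∈ _
      rw [← map_mul]
      exact hz _ (mem_of_eq (Ideal.mul_mem_left _ (X 2) m4) (by ring))

lemma mem_span_B (y : MvPolynomial (Fin 4) k ⧸ I14 k) :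
    y ∈ Submodule.span k (Set.range (B (k := k))) := by
  obtain ⟨p, rfl⟩ := Ideal.Quotient.mk_surjective y
  induction p using MvPolynomial.induction_on with
  | C a =>
    have e : mkq (MvPolynomial.C a) = a • B (k := k) 0 := by
      show _ = a • mkq 1
      rw [← Ideal.Quotient.mkₐ_eq_mk k, ← map_smul]
      congr 1
      rw [smul_eq_C_mul, mul_one]
    rw [e]
    exact Submodule.smul_mem _ _ (hspan 0)
  | add p q hp hq => rw [map_add]; exact add_mem hp hq
  | mul_X p i hp => rw [map_mul]; exact mul_X_mem i _ hp

end A8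

namespace A8
variable {k : Type u} [CommRing k]

local notation "mkq" => Ideal.Quotient.mk (I14 k)

noncomputable def eA : Fin 8 → A8 k :=
  ![1, S, T, U, V, S*T, S*U, T*U]

@[simp] lemma eA0 : eA (k := k) 0 = 1 := rfl
@[simp] lemma eA1 : eA (k := k) 1 = S := rfl
@[simp] lemma eA2 : eA (k := k) 2 = T := rfl
@[simp] lemma eA3 : eA (k := k) 3 = U := rfl
@[simp] lemma eA4 : eA (k := k) 4 = V := rfl
@[simp] lemma eA5 : eA (k := k) 5 = S * T := rfl
@[simp] lemma eA6 : eA (k := k) 6 = S * U := rfl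
@[simp] lemma eA7 : eA (k := k) 7 = T * U := rfl

lemma ψ_B (j : Fin 8) : ψ (B (k := k) j) = eA j := by
  fin_cases j
  · show φ (1 : MvPolynomial (Fin 4) k) = 1
    exact map_one _
  · show φ (X 0 : MvPolynomial (Fin 4) k) = S
    simp [φ]
  · show φ (X 1 : MvPolynomial (Fin 4) k) = T
    simp [φ]
  · show φ (X 2 : MvPolynomial (Fin 4) k) = U
    simp [φ]
  · show φ (X 3 : MvPolynomial (Fin 4) k) = V
    simp [φ]
  · show φ (X 0 * X 1 : MvPolynomial (Fin 4) k) = S * T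
    simp [φ]
  · show φ (X 0 * X 2 : MvPolynomial (Fin 4) k) = S * U
    simp [φ]
  · show φ (X 1 * X 2 : MvPolynomial (Fin 4) k) = T * U
    simp [φ]

lemma psi_sum (c : Fin 8 → k) :
    ψ (∑ j, c j • B (k := k) j) = ⟨c 0, c 1, c 2, c 3, c 4, c 5, c 6, c 7⟩ := by
  rw [map_sum]
  simp only [map_smul, ψ_B]
  rw [Fin.sum_univ_eight]
  simp only [eA0, eA1, eA2, eA3, eA4, eA5, eA6, eA7]
  ext <;> simp [S, T, U, V] <;> ring

lemma ψ_inj : Function.Injective (ψ (k := k)) := by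
  rw [injective_iff_map_eq_zero]
  intro y hy
  obtain ⟨c, hc⟩ := (Submodule.mem_span_range_iff_exists_fun k).mp (mem_span_B y)
  rw [← hc, psi_sum] at hy
  have h0 := congrArg A8.c1 hy
  have h1 := congrArg A8.cs hy
  have h2 := congrArg A8.ct hy
  have h3 := congrArg A8.cu hy
  have h4 := congrArg A8.cv hy
  have h5 := congrArg A8.cst hy
  have h6 := congrArg A8.csu hy
  have h7 := congrArg A8.ctu hy
  simp only [zero_c1, zero_cs, zero_ct, zero_cu, zero_cv, zero_cst, zero_csu, zero_ctu] at h0 h1 h2 h3 h4 h5 h6 h7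
  rw [← hc]
  rw [Fin.sum_univ_eight]
  rw [h0, h1, h2, h3, h4, h5, h6, h7]
  simp

lemma ψ_surj : Function.Surjective (ψ (k := k)) := by
  intro a
  refine ⟨∑ j, ![a.c1, a.cs, a.ct, a.cu, a.cv, a.cst, a.csu, a.ctu] j • B (k := k) j, ?_⟩
  rw [psi_sum]
  rfl

noncomputable def eqv : (MvPolynomial (Fin 4) k ⧸ I14 k) ≃ₐ[k] A8 k :=
  AlgEquiv.ofBijective ψ ⟨ψ_inj, ψ_surj⟩

end A8

section Transfer
variable {R S : Type*} [CommRing R] [CommRing S]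

lemma mem_annIdeal_iff (a y : R) : y ∈ annIdeal R a ↔ a * y = 0 := by
  simp [annIdeal, LinearMap.mem_ker]

lemma ann_transfer (e : R ≃+* S) (a b : R)
    (hab : annIdeal S (e a) = Ideal.span {e b}) : annIdeal R a = Ideal.span {b} := by
  ext y
  rw [mem_annIdeal_iff, Ideal.mem_span_singleton]
  constructor
  · intro hy
    have h : e y ∈ annIdeal S (e a) :=
      (mem_annIdeal_iff _ _).mpr (by rw [← map_mul, hy, map_zero])
    rw [hab, Ideal.mem_span_singleton] at h
    obtain ⟨c, hc⟩ := h
    exact ⟨e.symm c, by apply e.injective; rw [map_mul, hc, e.apply_symm_apply]⟩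
  · rintro ⟨c, rfl⟩
    have hw : e a * e b = 0 := by
      have h : e b ∈ annIdeal S (e a) := by
        rw [hab]; exact Ideal.subset_span rfl
      exact (mem_annIdeal_iff _ _).mp h
    apply e.injective
    rw [map_mul, map_mul, ← mul_assoc, hw, zero_mul, map_zero]

lemma isExactZeroDivisor_of_equiv (e : R ≃+* S) (x : R)
    (h : IsExactZeroDivisor S (e x)) : IsExactZeroDivisor R x := by
  obtain ⟨h0, hu, w, h1, h2⟩ := h
  refine ⟨fun hx => h0 (by rw [hx, map_zero]), fun hx => hu (hx.map e), e.symm w, ?_, ?_⟩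
  · exact ann_transfer e x (e.symm w) (by rwa [e.apply_symm_apply])
  · refine ann_transfer e (e.symm w) x ?_
    rwa [e.apply_symm_apply]

end Transfer

namespace A8
variable {k : Type u} [Field k]

variable (ϑ : k)

noncomputable def xA : A8 k := ⟨0, 1 - ϑ, ϑ, 1, 1, 0, 0, 0⟩
noncomputable def wA : A8 k := ⟨0, -(1+ϑ), -ϑ, 1, -ϑ, 0, 0, 0⟩

variable {ϑ}

lemma hxw (h3 : (3 : k) = 0) : xA ϑ * wA ϑ = 0 := by
  ext <;> simp [xA, wA] <;> linear_combination (-ϑ) * h3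

theorem A_exact (h3 : (3 : k) = 0) (h0 : ϑ ≠ 0) (h1 : ϑ ≠ 1) (hm1 : (1 : k) + ϑ ≠ 0) :
    IsExactZeroDivisor (A8 k) (xA ϑ) := by
  have hϑ1 : ϑ - 1 ≠ 0 := sub_ne_zero_of_ne h1
  have h1ϑ : (1 : k) - ϑ ≠ 0 := sub_ne_zero_of_ne (Ne.symm h1)
  refine ⟨?_, ?_, wA ϑ, ?_, ?_⟩
  · intro h
    have := congrArg A8.cu h
    simp [xA] at this
  · intro h
    obtain ⟨z, hz⟩ := h.exists_right_inv
    have := congrArg A8.c1 hz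
    simp [xA] at this
  · ext y
    rw [mem_annIdeal_iff, Ideal.mem_span_singleton]
    constructor
    · intro hy
      have e1 := congrArg A8.cu hy
      have e2 := congrArg A8.cst hy
      have e3 := congrArg A8.csu hy
      have e4 := congrArg A8.ctu hy
      simp [xA] at e1 e2 e3 e4
      -- e2 : (1-ϑ)*y.ct + ϑ*y.cs + y.cv = 0 (shape unknown, fix later)
      have hct : y.ct = -ϑ * y.cu := by linear_combination e4
      have hcs : y.cs = -(1+ϑ) * y.cu := by
        have h : (ϑ - 1) * (y.cs + (1+ϑ) * y.cu) = 0 := by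
          linear_combination e2 - e3 - (1-ϑ) * e4
        have := (mul_eq_zero.mp h).resolve_left hϑ1
        linear_combination this
      have hcv : y.cv = -ϑ * y.cu := by
        linear_combination e3 - hcs + (ϑ * y.cu) * h3
      refine ⟨⟨y.cu,
        y.csu + (1+ϑ) * ((y.cst + ϑ*y.csu + (1+ϑ)*y.ctu) / (ϑ*(1+ϑ))),
        y.ctu + ϑ * ((y.cst + ϑ*y.csu + (1+ϑ)*y.ctu) / (ϑ*(1+ϑ))),
        (y.cst + ϑ*y.csu + (1+ϑ)*y.ctu) / (ϑ*(1+ϑ)), 0, 0, 0, 0⟩, ?_⟩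
      have hD : ϑ * (1+ϑ) ≠ 0 := mul_ne_zero h0 hm1
      ext
      · simp [wA]; exact e1
      · simp [wA]; linear_combination hcs
      · simp [wA]; linear_combination hct
      · simp [wA]
      · simp [wA]; linear_combination hcv
      · simp [wA]; field_simp; linear_combination (y.cst*ϑ + y.cst*ϑ^2 + ϑ*y.ctu + 2*ϑ^2*y.ctu + ϑ^2*y.csu + ϑ^3*y.ctu + ϑ^3*y.csu + (y.cst - y.cst*ϑ^2 + ϑ*y.ctu + ϑ*y.csu - ϑ^2*y.ctu - ϑ^3*y.ctu - ϑ^3*y.csu + y.ctu)) * h3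
      · simp [wA]; field_simp; ring
      · simp [wA]
    · rintro ⟨c, rfl⟩
      rw [← mul_assoc, hxw h3, zero_mul]
  · ext y
    rw [mem_annIdeal_iff, Ideal.mem_span_singleton]
    constructor
    · intro hy
      have f1 := congrArg A8.cu hy
      have f2 := congrArg A8.cst hy
      have f3 := congrArg A8.csu hy
      have f4 := congrArg A8.ctu hy
      simp [wA] at f1 f2 f3 f4
      have hct : y.ct = ϑ * y.cu := by linear_combination f4
      have hA : y.cs + y.cv + (1+ϑ) * y.cu = 0 := by
        have h : ϑ * (y.cs + y.cv + (1+ϑ) * y.cu) = 0 := by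
          linear_combination -f2 - (1+ϑ) * f4
        exact (mul_eq_zero.mp h).resolve_left h0
      have hcv : y.cv = y.cu := by
        have h : (1+ϑ) * (y.cv - y.cu) = 0 := by
          linear_combination hA - f3 - ((1+ϑ) * y.cu) * h3
        have := (mul_eq_zero.mp h).resolve_left hm1
        linear_combination this
      have hcs : y.cs = (1-ϑ) * y.cu := by
        linear_combination f3 + ϑ * hcv + (ϑ * y.cu) * h3
      refine ⟨⟨y.cu,
        y.csu - (1-ϑ) * ((y.cst - ϑ*y.csu - (1-ϑ)*y.ctu) / (ϑ*(1-ϑ))),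
        y.ctu - ϑ * ((y.cst - ϑ*y.csu - (1-ϑ)*y.ctu) / (ϑ*(1-ϑ))),
        (y.cst - ϑ*y.csu - (1-ϑ)*y.ctu) / (ϑ*(1-ϑ)), 0, 0, 0, 0⟩, ?_⟩
      have hD : ϑ * (1-ϑ) ≠ 0 := mul_ne_zero h0 h1ϑ
      ext
      · simp [xA]; exact f1
      · simp [xA]; linear_combination hcs
      · simp [xA]; linear_combination hct
      · simp [xA]
      · simp [xA]; linear_combination hcv
      · simp [xA]; field_simp; linear_combination (y.cst*ϑ - y.cst*ϑ^2 - ϑ*y.ctu + 2*ϑ^2*y.ctu - ϑ^2*y.csu - ϑ^3*y.ctu + ϑ^3*y.csu + (y.cst - y.cst*ϑ + y.cst*ϑ^2 + 2*ϑ*y.ctu - ϑ*y.csu - 2*ϑ^2*y.ctu + ϑ^2*y.csu + ϑ^3*y.ctu - ϑ^3*y.csu - y.ctu)) * h3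
      · simp [xA]
      · simp [xA]
    · rintro ⟨c, rfl⟩
      rw [← mul_assoc, mul_comm (wA ϑ) (xA ϑ), hxw h3, zero_mul]

end A8

/-- if `k` is a field of characteristic 3 properly containing its
prime subfield `F₃` (i.e. some `ϑ ∈ k` is not in the image of `ℤ`), then
`(1 - ϑ)s + ϑt + u + v` is an exact zero divisor in
`R = k[s,t,u,v]/(s², sv, t², tv, u², uv, v² - st - su)`. -/
theorem stmt17 (k : Type u) [Field k] [CharP k 3] (ϑ : k)
    (hϑ : ϑ ∉ Set.range (Int.cast : ℤ → k)) :
    IsExactZeroDivisor (R14 k)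
      (Ideal.Quotient.mk _ ((1 - C ϑ) * X 0 + C ϑ * X 1 + X 2 + X 3)) := by
  have h3 : (3 : k) = 0 := by exact_mod_cast CharP.cast_eq_zero k 3
  have h0 : ϑ ≠ 0 := fun h => hϑ ⟨0, by simp [h]⟩
  have h1 : ϑ ≠ 1 := fun h => hϑ ⟨1, by simp [h]⟩
  have hm1 : (1 : k) + ϑ ≠ 0 := fun h => hϑ ⟨-1, by push_cast; linear_combination -h⟩
  apply isExactZeroDivisor_of_equiv (A8.eqv (k := k)).toRingEquiv
  have hx : (A8.eqv (k := k)).toRingEquiv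
      (Ideal.Quotient.mk _ ((1 - C ϑ) * X 0 + C ϑ * X 1 + X 2 + X 3)) = A8.xA ϑ := by
    show A8.ψ (Ideal.Quotient.mk _ ((1 - C ϑ) * X 0 + C ϑ * X 1 + X 2 + X 3)) = A8.xA ϑ
    rw [A8.ψ_mk]
    simp only [A8.φ, map_add, map_mul, map_sub, map_one, aeval_X, aeval_C]
    ext <;> simp [sub_eq_add_neg, A8.S, A8.T, A8.U, A8.V, A8.xA]
  rw [hx]
  exact A8.A_exact h3 h0 h1 hm1
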